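/- arXiv:2004.14835 — 3 statements merged into one kernel-verified Lean document; each statement's English description precedes it below -/
import Mathlib

section
/- If frames F_0, …, F_k satisfy the PrIC3 invariants (initiality F_0 = Φ(0); chain property F_i ≤ F_{i+1} for all i < k; frame safety F_i[s_I] ≤ λ for all i ≤ k; relative inductivity Φ(F_i) ≤ F_{i+1} for all i < k), then for every state s and every i ≤ k, the maximal i-step-bounded reachability probability satisfies Pr^max(s → ◊^{≤i} B) ≤ F_i[s]. -/
open scoped ENNReal BigOperators Classical
set_option linter.unusedSectionVars false

variable {S Act : Type*} [Fintype S] [Fintype Act]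

/-- A frame maps every state into the unit interval `[0,1]` (embedded in `ℝ≥0∞`). -/
def IsFrame {S : Type*} (F : S → ℝ≥0∞) : Prop := ∀ s, F s ≤ 1

/-- The actions enabled at a state: those with positive outgoing probability mass. -/
def enabled {S Act : Type*} (P : S → Act → S → ℝ≥0∞) (s : S) : Set Act :=
  {a | ∃ s', 0 < P s a s'}

/-- The Bellman operator of a (sub)stochastic transition function `P` with bad states `B`. -/
noncomputable def bellman (P : S → Act → S → ℝ≥0∞) (B : Set S) (F : S → ℝ≥0∞) : S → ℝ≥0∞ :=
  fun s => if s ∈ B then 1 else ⨆ a ∈ enabled P s, ∑ s', P s a s' * F s'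

theorem bellman_mono (P : S → Act → S → ℝ≥0∞) (B : Set S) : Monotone (bellman P B) := by
  intro F G h s
  unfold bellman
  split
  · exact le_rfl
  · exact iSup_mono fun a => iSup_mono fun _ =>
      Finset.sum_le_sum fun s' _ => by gcongr; exact h s'

/-- The Bellman operator as a monotone map on the complete lattice of frames. -/
noncomputable def bellmanHom (P : S → Act → S → ℝ≥0∞) (B : Set S) :
    (S → ℝ≥0∞) →o (S → ℝ≥0∞) := ⟨bellman P B, bellman_mono P B⟩

/-- The maximal reachability probability `Pr^max(s → ◊B)`,
as the least fixed point of the Bellman operator. -/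
noncomputable def prMax (P : S → Act → S → ℝ≥0∞) (B : Set S) : S → ℝ≥0∞ :=
  OrderHom.lfp (bellmanHom P B)

/-- A finite Markov decision process. -/
structure MDP (S Act : Type*) [Fintype S] [Fintype Act] where
  init : S
  P : S → Act → S → ℝ≥0∞
  stoch : ∀ s a, a ∈ enabled P s → ∑ s', P s a s' = 1
  exists_enabled : ∀ s, (enabled P s).Nonempty

/-- The PrIC3 invariants for frames `F 0, …, F k`: initiality, chain property,
frame safety, and relative inductivity. -/
def PrIC3Inv (M : MDP S Act) (B : Set S) (lam : ℝ≥0∞) (F : ℕ → S → ℝ≥0∞) (k : ℕ) : Prop :=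
  (F 0 = bellman M.P B (fun _ => 0)) ∧
  (∀ i < k, F i ≤ F (i+1)) ∧
  (∀ i ≤ k, F i M.init ≤ lam) ∧
  (∀ i < k, bellman M.P B (F i) ≤ F (i+1))

/-- The maximal `i`-step-bounded reachability probability `Pr^max(s → ◊^{≤i} B)`,
which equals `Φ^{i+1}(0)[s]`. -/
noncomputable def boundedReach (P : S → Act → S → ℝ≥0∞) (B : Set S) (i : ℕ) : S → ℝ≥0∞ :=
  (bellman P B)^[i+1] (fun _ => 0)

/-- the PrIC3 invariants imply that every frame overapproximates the
corresponding step-bounded reachability probabilities. -/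
theorem pric3_inv_overapprox (M : MDP S Act) (B : Set S) (lam : ℝ≥0∞)
    (F : ℕ → S → ℝ≥0∞) (k : ℕ) (hinv : PrIC3Inv M B lam F k) :
    ∀ s, ∀ i ≤ k, boundedReach M.P B i s ≤ F i s := by
  obtain ⟨h0, _, _, hind⟩ := hinv
  have key : ∀ i ≤ k, boundedReach M.P B i ≤ F i := by
    intro i
    induction i with
    | zero => intro _; rw [h0]; intro s; simp [boundedReach]
    | succ n ih =>
      intro h s
      have hn := ih (Nat.le_of_succ_le h)
      calc boundedReach M.P B (n+1) s
          = bellman M.P B (boundedReach M.P B n) s := by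
            simp [boundedReach, Function.iterate_succ_apply']
        _ ≤ bellman M.P B (F n) s := bellman_mono M.P B hn s
        _ ≤ F (n+1) s := hind n h s
  exact fun s i hi => key i hi s
end

section
/- If frames F_0, …, F_k satisfy the PrIC3 invariants and there exists i < k with F_i = F_{i+1}, then the maximal unbounded reachability probability from s_I satisfies Pr^max(s_I → ◊B) ≤ λ. -/
open scoped ENNReal BigOperators Classical
set_option linter.unusedSectionVars false

variable {S Act : Type*} [Fintype S] [Fintype Act]

/-- PrIC3 invariants plus two equal consecutive frames imply safety. -/
theorem pric3_equal_frames_safe (M : MDP S Act) (B : Set S) (lam : ℝ≥0∞)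
    (F : ℕ → S → ℝ≥0∞) (k : ℕ) (hinv : PrIC3Inv M B lam F k)
    (heq : ∃ i < k, F i = F (i+1)) :
    prMax M.P B M.init ≤ lam := by
  obtain ⟨i, hik, hFi⟩ := heq
  obtain ⟨_, _, hsafe, hind⟩ := hinv
  have hpre : bellmanHom M.P B (F i) ≤ F i := by
    calc bellmanHom M.P B (F i) ≤ F (i+1) := hind i hik
    _ = F i := hFi.symm
  have hlfp : OrderHom.lfp (bellmanHom M.P B) ≤ F i := OrderHom.lfp_le _ hpre
  exact le_trans (hlfp M.init) (hsafe i (le_of_lt hik))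
end

section
/- Monotonicity of reachability probabilities under subsystems: if M' is a subMDP of M (induced by a subset S' of states containing s_I, with transition probabilities restricted to S' and missing mass treated as lost), then the maximal reachability probability of B ∩ S' in M' is at most the maximal reachability probability of B in M. Consequently, if the subMDP is unsafe (probability > λ), then M is unsafe. -/
open scoped ENNReal BigOperators Classical
set_option linter.unusedSectionVars false

variable {S Act : Type*} [Fintype S] [Fintype Act]

/-- The transition function of the subMDP induced by a subset `S'` of states:
transitions are restricted to `S'`, missing probability mass is lost. -/
noncomputable def subP (P : S → Act → S → ℝ≥0∞) (S' : Set S) : S → Act → S → ℝ≥0∞ :=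
  fun s a s' => if s ∈ S' ∧ s' ∈ S' then P s a s' else 0

/-- the maximal reachability probability in a subMDP is at most the one
in the full MDP; hence an unsafe subMDP witnesses unsafety of the MDP. -/
theorem subMDP_reachability_mono (M : MDP S Act) (B : Set S) (lam : ℝ≥0∞)
    (S' : Set S) (hinit : M.init ∈ S') :
    (∀ s, prMax (subP M.P S') (B ∩ S') s ≤ prMax M.P B s) ∧
    (lam < prMax (subP M.P S') (B ∩ S') M.init → lam < prMax M.P B M.init) := by
  -- subP ≤ P pointwise
  have hsub_le : ∀ s a s', subP M.P S' s a s' ≤ M.P s a s' := by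
    intro s a s'
    unfold subP
    split <;> simp
  have hen : ∀ s, enabled (subP M.P S') s ⊆ enabled M.P s := by
    intro s a ⟨s', hs'⟩
    exact ⟨s', lt_of_lt_of_le hs' (hsub_le s a s')⟩
  -- prMax M.P B ≤ 1
  have hone : ∀ s, prMax M.P B s ≤ 1 := by
    have : OrderHom.lfp (bellmanHom M.P B) ≤ (fun _ => 1) := by
      apply OrderHom.lfp_le
      intro s
      simp only [bellmanHom, OrderHom.coe_mk, bellman]
      split
      · exact le_rfl
      · apply iSup₂_le
        intro a ha
        calc ∑ s', M.P s a s' * 1 = ∑ s', M.P s a s' := by simp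
          _ ≤ 1 := le_of_eq (M.stoch s a ha)
    exact this
  have key : ∀ s, prMax (subP M.P S') (B ∩ S') s ≤ prMax M.P B s := by
    have : OrderHom.lfp (bellmanHom (subP M.P S') (B ∩ S')) ≤ prMax M.P B := by
      apply OrderHom.lfp_le
      intro s
      have hfix : bellman M.P B (prMax M.P B) s = prMax M.P B s := by
        have := OrderHom.map_lfp (bellmanHom M.P B)
        exact congrFun this s
      simp only [bellmanHom, OrderHom.coe_mk, bellman]
      by_cases hsB : s ∈ B
      · have hrhs : prMax M.P B s = 1 := by
          rw [← hfix]; simp [bellman, hsB]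
        rw [hrhs]
        split
        · exact le_rfl
        · apply iSup₂_le
          intro a ha
          calc ∑ s', subP M.P S' s a s' * prMax M.P B s'
              ≤ ∑ s', M.P s a s' * 1 :=
                Finset.sum_le_sum fun s' _ =>
                  mul_le_mul' (hsub_le s a s') (hone s')
            _ = ∑ s', M.P s a s' := by simp
            _ = 1 := M.stoch s a (hen s ha)
      · have hsBS : s ∉ B ∩ S' := fun h => hsB h.1
        rw [if_neg hsBS, ← hfix]
        simp only [bellman, if_neg hsB]
        apply iSup₂_le
        intro a ha
        refine le_trans ?_ (le_iSup₂ (f := fun a _ => ∑ s', M.P s a s' * prMax M.P B s') a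
          (hen s ha))
        exact Finset.sum_le_sum fun s' _ =>
          mul_le_mul_left (hsub_le s a s') _
    exact this
  exact ⟨key, fun h => lt_of_lt_of_le h (key M.init)⟩
end
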